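/- Let W : Fin M → (density matrices on ℂⁿ) be a classical-quantum channel restricted to a codebook of M codewords, used with equiprobable messages. Then for every density matrix μ₀ and every t ≥ 0, the minimum error probability Pe over all decoding POVMs satisfies Pe ≥ (1/M)·Σ_m tr(W_m · {W_m − tμ₀ ≤ 0}) − t/M. -/

import Mathlib

open Matrix
open scoped ComplexOrder

/-- Spectral projection of a Hermitian matrix onto the eigenspaces whose
eigenvalue satisfies the predicate `pred`. -/
noncomputable def specProj {ι : Type*} [Fintype ι] [DecidableEq ι]
    {A : Matrix ι ι ℂ} (hA : A.IsHermitian) (pred : ℝ → Prop) : Matrix ι ι ℂ :=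
  letI := Classical.decPred pred
  (hA.eigenvectorUnitary : Matrix ι ι ℂ) *
    Matrix.diagonal (fun i => if pred (hA.eigenvalues i) then (1 : ℂ) else 0) *
    star (hA.eigenvectorUnitary : Matrix ι ι ℂ)

section helpers
variable {ι : Type*} [Fintype ι] [DecidableEq ι]

variable {ι : Type*} [Fintype ι] [DecidableEq ι]

lemma psd_trace_re_nonneg {A : Matrix ι ι ℂ} (hA : A.PosSemidef) : 0 ≤ A.trace.re := by
  have h : ∀ i, 0 ≤ (A i i).re := by
    intro i
    have := hA.diag_nonneg (i := i)
    rw [Complex.le_def] at this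
    simpa using this.1
  rw [Matrix.trace, Complex.re_sum]
  exact Finset.sum_nonneg fun i _ => by simpa using h i

open scoped MatrixOrder in
lemma psd_trace_mul_re_nonneg {A B : Matrix ι ι ℂ} (hA : A.PosSemidef) (hB : B.PosSemidef) :
    0 ≤ (Matrix.trace (A * B)).re := by
  have h1 : A = CFC.sqrt A * CFC.sqrt A := (CFC.sqrt_mul_sqrt_self A hA.nonneg).symm
  have h2 : Matrix.trace (A * B) = Matrix.trace (CFC.sqrt A * B * CFC.sqrt A) := by
    conv_lhs => rw [h1]
    rw [Matrix.mul_assoc, Matrix.trace_mul_comm]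
  have h3 : (CFC.sqrt A * B * CFC.sqrt A).PosSemidef := by
    have := hB.mul_mul_conjTranspose_same (CFC.sqrt A)
    rwa [(Matrix.nonneg_iff_posSemidef.mp (CFC.sqrt_nonneg A)).1.eq] at this
  rw [h2]; exact psd_trace_re_nonneg h3
end helpers

section spec
variable {ι : Type*} [Fintype ι] [DecidableEq ι] {A : Matrix ι ι ℂ}

variable {ι : Type*} [Fintype ι] [DecidableEq ι] {A : Matrix ι ι ℂ}

/-- Conjugation of a diagonal matrix by the eigenvector unitary of `A`. -/
noncomputable def conjD (hA : A.IsHermitian) (d : ι → ℂ) : Matrix ι ι ℂ :=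
  (hA.eigenvectorUnitary : Matrix ι ι ℂ) * Matrix.diagonal d *
    star (hA.eigenvectorUnitary : Matrix ι ι ℂ)

lemma conjD_psd (hA : A.IsHermitian) {d : ι → ℂ} (hd : ∀ i, 0 ≤ d i) :
    (conjD hA d).PosSemidef := by
  have := (Matrix.posSemidef_diagonal_iff.mpr hd).mul_mul_conjTranspose_same
    (hA.eigenvectorUnitary : Matrix ι ι ℂ)
  simpa [conjD, Matrix.star_eq_conjTranspose] using this

lemma conjD_mul (hA : A.IsHermitian) (d e : ι → ℂ) :
    conjD hA d * conjD hA e = conjD hA (d * e) := by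
  have hU : star (hA.eigenvectorUnitary : Matrix ι ι ℂ) *
      (hA.eigenvectorUnitary : Matrix ι ι ℂ) = 1 :=
    Matrix.mem_unitaryGroup_iff'.mp hA.eigenvectorUnitary.2
  simp only [conjD, Matrix.mul_assoc]
  rw [← Matrix.mul_assoc (star (hA.eigenvectorUnitary : Matrix ι ι ℂ)), hU, Matrix.one_mul,
    ← Matrix.mul_assoc (Matrix.diagonal d), Matrix.diagonal_mul_diagonal]
  rfl

lemma conjD_one (hA : A.IsHermitian) : conjD hA 1 = 1 := by
  have hU : (hA.eigenvectorUnitary : Matrix ι ι ℂ) *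
      star (hA.eigenvectorUnitary : Matrix ι ι ℂ) = 1 :=
    Matrix.mem_unitaryGroup_iff.mp hA.eigenvectorUnitary.2
  rw [conjD, show Matrix.diagonal (1 : ι → ℂ) = 1 from Matrix.diagonal_one, Matrix.mul_one, hU]

lemma conjD_sub (hA : A.IsHermitian) (d e : ι → ℂ) :
    conjD hA d - conjD hA e = conjD hA (d - e) := by
  rw [conjD, conjD, conjD, show (d - e) = fun i => d i - e i from rfl, ← Matrix.diagonal_sub, Matrix.mul_sub, Matrix.sub_mul]

lemma conjD_neg (hA : A.IsHermitian) (d : ι → ℂ) : -conjD hA d = conjD hA (-d) := by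
  rw [conjD, conjD, show (-d) = fun i => -(d i) from rfl, ← Matrix.diagonal_neg, Matrix.mul_neg, Matrix.neg_mul]

lemma conjD_spectral (hA : A.IsHermitian) :
    A = conjD hA (fun i => (hA.eigenvalues i : ℂ)) := by
  simpa [conjD, Function.comp_def] using hA.spectral_theorem

lemma specProj_eq (hA : A.IsHermitian) (pred : ℝ → Prop) [DecidablePred pred] :
    specProj hA pred = conjD hA (fun i => if pred (hA.eigenvalues i) then 1 else 0) := by
  unfold specProj conjD
  refine congrArg₂ (· * ·) (congrArg₂ (· * ·) rfl ?_) rfl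
  exact congrArg Matrix.diagonal (funext fun i => by
    by_cases h : pred (hA.eigenvalues i) <;> simp [h])

end spec

/-- Hayashi–Nagaoka converse bound, Eq. (43): for a
classical-quantum channel used with `M` equiprobable codewords, every
decoding POVM satisfies
`1 − (1/M)Σ_m tr(W_m E_m) ≥ (1/M)Σ_m tr(W_m {W_m − tμ₀ ≤ 0}) − t/M`. -/
theorem cq_channel_converse {n M : ℕ}
    {W : Fin M → Matrix (Fin n) (Fin n) ℂ}
    (hW : ∀ m, (W m).PosSemidef) (hWt : ∀ m, (W m).trace = 1)
    {μ₀ : Matrix (Fin n) (Fin n) ℂ} (hμ : μ₀.PosSemidef) (hμt : μ₀.trace = 1)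
    {t : ℝ} (ht : 0 ≤ t)
    (hH : ∀ m, (W m - (t : ℂ) • μ₀).IsHermitian)
    {E : Fin M → Matrix (Fin n) (Fin n) ℂ}
    (hE : ∀ m, (E m).PosSemidef) (hE1 : ∑ m, E m = 1) :
    1 - (1 / M) * ∑ m, (Matrix.trace (W m * E m)).re ≥
      (1 / M) * (∑ m, (Matrix.trace (W m * specProj (hH m) (fun x => x ≤ 0))).re)
        - t / M := by
  -- abbreviations
  set P : Fin M → Matrix (Fin n) (Fin n) ℂ :=
    fun m => specProj (hH m) (fun x => x ≤ 0) with hPdef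
  -- per-codeword facts
  have hProps : ∀ m,
      (P m).PosSemidef ∧ (1 - P m).PosSemidef ∧
      (-((W m - (t:ℂ) • μ₀) * P m)).PosSemidef ∧
      ((W m - (t:ℂ) • μ₀) * (1 - P m)).PosSemidef := by
    intro m
    set A := W m - (t:ℂ) • μ₀ with hA
    have hAm := hH m
    set lam := hAm.eigenvalues with hlam
    set ind : Fin n → ℂ := fun i => if lam i ≤ 0 then 1 else 0 with hind
    have hP : P m = conjD hAm ind := specProj_eq hAm _
    have h1P : (1 : Matrix (Fin n) (Fin n) ℂ) - P m = conjD hAm (fun i => 1 - ind i) := by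
      rw [hP, ← conjD_one hAm, conjD_sub]
      rfl
    have hAconj : A = conjD hAm (fun i => (lam i : ℂ)) := conjD_spectral hAm
    refine ⟨?_, ?_, ?_, ?_⟩
    · rw [hP]
      refine conjD_psd hAm fun i => ?_
      by_cases h : lam i ≤ 0 <;> simp [hind, h]
    · rw [h1P]
      refine conjD_psd hAm fun i => ?_
      by_cases h : lam i ≤ 0 <;> simp [hind, h]
    · rw [hP, hAconj, conjD_mul, conjD_neg]
      refine conjD_psd hAm fun i => ?_
      by_cases h : lam i ≤ 0
      · have : (-((fun i => (lam i : ℂ)) * ind)) i = ((-lam i : ℝ) : ℂ) := by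
          simp [hind, h]
        rw [this]
        exact Complex.zero_le_real.mpr (by linarith)
      · simp [hind, h]
    · rw [h1P, hAconj, conjD_mul]
      refine conjD_psd hAm fun i => ?_
      by_cases h : lam i ≤ 0
      · simp [hind, h]
      · have : ((fun i => (lam i : ℂ)) * fun i => 1 - ind i) i = ((lam i : ℝ) : ℂ) := by
          simp [hind, h]
        rw [this]
        exact Complex.zero_le_real.mpr (le_of_not_ge h)
  -- each 1 - E m is PSD
  have h1E : ∀ m, ((1 : Matrix (Fin n) (Fin n) ℂ) - E m).PosSemidef := by
    intro m
    have : (1 : Matrix (Fin n) (Fin n) ℂ) - E m = ∑ k ∈ Finset.univ.erase m, E k := by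
      rw [← hE1, Finset.sum_erase_eq_sub (Finset.mem_univ m)]
    rw [this]
    exact Finset.sum_induction _ _ (fun a b ha hb => ha.add hb)
      (Matrix.PosSemidef.zero) (fun k _ => hE k)
  -- per-codeword inequality on real parts
  have hkey : ∀ m, 0 ≤ (1 - (Matrix.trace (W m * E m)).re)
      - (Matrix.trace (W m * P m)).re + t * (Matrix.trace (μ₀ * E m)).re := by
    intro m
    set A := W m - (t:ℂ) • μ₀ with hA
    have hid : Matrix.trace (W m * (1 - E m)) - Matrix.trace (W m * P m)
        + (t:ℂ) * Matrix.trace (μ₀ * E m)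
        = Matrix.trace ((A * (1 - P m)) * (1 - E m))
          + Matrix.trace ((-(A * P m)) * E m)
          + (t:ℂ) * Matrix.trace (μ₀ * (1 - P m)) := by
      simp only [hA, Matrix.sub_mul, Matrix.mul_sub, Matrix.mul_one, Matrix.one_mul,
        Matrix.trace_sub, Matrix.trace_add, Matrix.neg_mul, Matrix.trace_neg,
        Matrix.smul_mul, Matrix.trace_smul, smul_eq_mul, Matrix.mul_assoc, hμt]
      ring
    have hre := congrArg Complex.re hid
    simp only [Complex.add_re, Complex.sub_re, Complex.re_ofReal_mul] at hre
    have hWE : Matrix.trace (W m * (1 - E m)) = 1 - Matrix.trace (W m * E m) := by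
      rw [Matrix.mul_sub, Matrix.mul_one, Matrix.trace_sub, hWt m]
    rw [hWE] at hre
    simp only [Complex.sub_re, Complex.one_re] at hre
    obtain ⟨hP1, hP2, hP3, hP4⟩ := hProps m
    have t1 : 0 ≤ ((A * (1 - P m)) * (1 - E m)).trace.re :=
      psd_trace_mul_re_nonneg hP4 (h1E m)
    have t2 : 0 ≤ ((-(A * P m)) * E m).trace.re :=
      psd_trace_mul_re_nonneg hP3 (hE m)
    have t3 : 0 ≤ (μ₀ * (1 - P m)).trace.re := psd_trace_mul_re_nonneg hμ hP2
    have := mul_nonneg ht t3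
    linarith [hre]
  -- sum of trace(μ₀ * E m) real parts equals 1
  have hsumE : ∑ m, (Matrix.trace (μ₀ * E m)).re = 1 := by
    have : ∑ m, Matrix.trace (μ₀ * E m) = 1 := by
      rw [← Matrix.trace_sum, ← Finset.mul_sum, hE1, Matrix.mul_one, hμt]
    calc ∑ m, (Matrix.trace (μ₀ * E m)).re = (∑ m, Matrix.trace (μ₀ * E m)).re := by
          rw [Complex.re_sum]
      _ = 1 := by rw [this]; simp
  -- sum the per-codeword inequalities
  have hsum : 0 ≤ ((M : ℝ) - ∑ m, (Matrix.trace (W m * E m)).re)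
      - (∑ m, (Matrix.trace (W m * P m)).re) + t := by
    have := Finset.sum_nonneg (fun m (_ : m ∈ Finset.univ) => hkey m)
    simp only [Finset.sum_add_distrib, Finset.sum_sub_distrib, ← Finset.mul_sum,
      Finset.sum_const, Finset.card_univ, Fintype.card_fin, nsmul_eq_mul, mul_one] at this
    rw [hsumE] at this
    linarith
  -- conclude
  rcases Nat.eq_zero_or_pos M with hM | hM
  · subst hM
    simp
  · have hM' : (0:ℝ) < M := by exact_mod_cast hM
    set SE := ∑ m, (Matrix.trace (W m * E m)).re
    set SP := ∑ m, (Matrix.trace (W m * P m)).re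
    rw [ge_iff_le]
    have h1 : (1 / (M:ℝ)) * ((SP - t)) ≤ (1 / (M:ℝ)) * ((M:ℝ) - SE) := by
      apply mul_le_mul_of_nonneg_left _ (by positivity)
      linarith
    have h2 : (1 / (M:ℝ)) * (M:ℝ) = 1 := by field_simp
    calc (1 / (M:ℝ)) * SP - t / M = (1 / (M:ℝ)) * (SP - t) := by ring
      _ ≤ (1 / (M:ℝ)) * ((M:ℝ) - SE) := h1
      _ = 1 - (1 / (M:ℝ)) * SE := by rw [mul_sub, h2]
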